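/- Let n, m be positive integers and let f : ℝ^{n×m} → ℝ be continuously differentiable. Define ℓ(u, V, w) := f(diag(u) V diag(w)) for u ∈ ℝ^n, V ∈ ℝ^{n×m}, w ∈ ℝ^m, where diag(v) is the diagonal matrix with diagonal v. If t ↦ (u(t), V(t), w(t)) is a differentiable curve on [0,T) following the gradient flow (u'(t), V'(t), w'(t)) = −∇ℓ(u(t), V(t), w(t)), then for every i ∈ {1,…,n} the quantity u_i(t)² − Σ_{j=1}^m V_{ij}(t)² is constant in t, and for every j ∈ {1,…,m} the quantity w_j(t)² − Σ_{i=1}^n V_{ij}(t)² is constant in t. -/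

import Mathlib

open InnerProductSpace
attribute [local instance] Matrix.normedAddCommGroup Matrix.normedSpace

/-- The product `diag(u) V diag(w)` associated to the parameter vector
`θ = (u, V, w)` of a 3-layer network with scalar input and output. -/
noncomputable def threeLayerLift (n m : ℕ)
    (θ : EuclideanSpace ℝ (Fin n ⊕ (Fin n × Fin m) ⊕ Fin m)) :
    Matrix (Fin n) (Fin m) ℝ :=
  Matrix.diagonal (fun i => θ (Sum.inl i)) *
    Matrix.of (fun i j => θ (Sum.inr (Sum.inl (i, j)))) *
      Matrix.diagonal (fun j => θ (Sum.inr (Sum.inr j)))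

abbrev tlE (n m : ℕ) := EuclideanSpace ℝ (Fin n ⊕ (Fin n × Fin m) ⊕ Fin m)

lemma tl_apply (n m : ℕ) (p : tlE n m) (i : Fin n) (j : Fin m) :
    threeLayerLift n m p i j =
      p (Sum.inl i) * p (Sum.inr (Sum.inl (i, j))) * p (Sum.inr (Sum.inr j)) := by
  simp [threeLayerLift, Matrix.mul_apply, Matrix.diagonal, Finset.sum_ite_eq]

lemma tl_diff (n m : ℕ) : Differentiable ℝ (threeLayerLift n m) := by
  have he : threeLayerLift n m = fun p => Matrix.of fun i j =>
      p (Sum.inl i) * p (Sum.inr (Sum.inl (i, j))) * p (Sum.inr (Sum.inr j)) := by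
    funext p; ext i j; rw [tl_apply]; rfl
  rw [he]
  have hk : ∀ k, Differentiable ℝ (fun p : tlE n m => p k) := fun k =>
    (EuclideanSpace.proj (𝕜 := ℝ) k).differentiable
  exact differentiable_pi.2 fun i => differentiable_pi.2 fun j =>
    (((hk _).mul (hk _)).mul (hk _))

noncomputable def vU (n m : ℕ) (i : Fin n) (p : tlE n m) : tlE n m :=
  WithLp.toLp 2 (Sum.elim (fun i' => if i' = i then p (Sum.inl i') else 0)
    (Sum.elim (fun q => if q.1 = i then -p (Sum.inr (Sum.inl q)) else 0) (fun _ => 0)))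

noncomputable def γU (n m : ℕ) (i : Fin n) (p : tlE n m) (s : ℝ) : tlE n m :=
  WithLp.toLp 2 (Sum.elim (fun i' => (if i' = i then Real.exp s else 1) * p (Sum.inl i'))
    (Sum.elim (fun q => (if q.1 = i then Real.exp (-s) else 1) * p (Sum.inr (Sum.inl q)))
      (fun j => p (Sum.inr (Sum.inr j)))))

lemma γU_zero (n m : ℕ) (i : Fin n) (p : tlE n m) : γU n m i p 0 = p := by
  ext k
  rcases k with i' | q | j <;> simp [γU]

lemma hasDerivAt_exp_mul (a : ℝ) : HasDerivAt (fun s : ℝ => Real.exp s * a) a 0 := by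
  simpa using (Real.hasDerivAt_exp 0).mul_const a

lemma hasDerivAt_exp_neg_mul (a : ℝ) :
    HasDerivAt (fun s : ℝ => Real.exp (-s) * a) (-a) 0 := by
  have h1 : HasDerivAt (fun s : ℝ => Real.exp (-s)) (-1) 0 := by
    have := (Real.hasDerivAt_exp (-0)).comp 0 ((hasDerivAt_id (0:ℝ)).neg)
    simpa [Function.comp_def] using this
  simpa using h1.mul_const a

lemma hasDerivAt_γU (n m : ℕ) (i : Fin n) (p : tlE n m) :
    HasDerivAt (γU n m i p) (vU n m i p) 0 := by
  have h : ∀ k, HasDerivAt (fun s => γU n m i p s k) (vU n m i p k) 0 := by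
    intro k
    rcases k with i' | q | j
    · by_cases h : i' = i <;>
        simp [γU, vU, h, hasDerivAt_exp_mul, hasDerivAt_const]
    · by_cases h : q.1 = i <;>
        simp [γU, vU, h, hasDerivAt_exp_neg_mul, hasDerivAt_const]
    · simp [γU, vU, hasDerivAt_const]
  have h2 : HasDerivAt (fun s => (fun k => γU n m i p s k :
      (Fin n ⊕ (Fin n × Fin m) ⊕ Fin m) → ℝ)) (fun k => vU n m i p k) 0 :=
    hasDerivAt_pi.2 h
  exact ((PiLp.continuousLinearEquiv 2 ℝ
    (fun _ : Fin n ⊕ (Fin n × Fin m) ⊕ Fin m => ℝ)).symm.toContinuousLinearMap.hasFDerivAt.comp_hasDerivAt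
    0 h2 :)

lemma tl_γU (n m : ℕ) (i : Fin n) (p : tlE n m) (s : ℝ) :
    threeLayerLift n m (γU n m i p s) = threeLayerLift n m p := by
  ext i' j
  rw [tl_apply, tl_apply]
  simp only [γU, Sum.elim_inl, Sum.elim_inr]
  by_cases h : i' = i
  · simp only [h, if_pos rfl, Real.exp_neg, if_true]
    field_simp
  · simp [h]

lemma fderiv_vU_zero (n m : ℕ) (f : Matrix (Fin n) (Fin m) ℝ → ℝ) (hf : ContDiff ℝ 1 f)
    (p : tlE n m) (i : Fin n) :
    fderiv ℝ (fun q => f (threeLayerLift n m q)) p (vU n m i p) = 0 := by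
  set g := fun q : tlE n m => f (threeLayerLift n m q) with hgdef
  have hgd : DifferentiableAt ℝ g p :=
    ((hf.differentiable one_ne_zero) _).comp p ((tl_diff n m) p)
  have hF' : HasFDerivAt g (fderiv ℝ g p) (γU n m i p 0) := by
    rw [γU_zero]; exact hgd.hasFDerivAt
  have hchain : HasDerivAt (fun s => g (γU n m i p s))
      (fderiv ℝ g p (vU n m i p)) 0 :=
    hF'.comp_hasDerivAt 0 (hasDerivAt_γU n m i p)
  have hconst : (fun s => g (γU n m i p s)) = fun _ => g p := by
    funext s
    simp only [hgdef]
    rw [tl_γU]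
  rw [hconst] at hchain
  exact hchain.unique (hasDerivAt_const 0 (g p))

lemma gradU (n m : ℕ) (f : Matrix (Fin n) (Fin m) ℝ → ℝ) (hf : ContDiff ℝ 1 f)
    (p : tlE n m) (i : Fin n) :
    (gradient (fun q => f (threeLayerLift n m q)) p) (Sum.inl i) * p (Sum.inl i) =
      ∑ j, (gradient (fun q => f (threeLayerLift n m q)) p) (Sum.inr (Sum.inl (i, j))) *
        p (Sum.inr (Sum.inl (i, j))) := by
  set g := fun q : tlE n m => f (threeLayerLift n m q) with hgdef
  have h : (inner ℝ (gradient g p) (vU n m i p) : ℝ) = fderiv ℝ g p (vU n m i p) :=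
    InnerProductSpace.toDual_symm_apply
  rw [fderiv_vU_zero n m f hf p i] at h
  rw [real_inner_comm] at h
  rw [PiLp.inner_apply] at h
  simp only [RCLike.inner_apply, conj_trivial, Fintype.sum_sum_type, Fintype.sum_prod_type,
    vU, Sum.elim_inl, Sum.elim_inr, mul_ite, mul_zero, mul_neg, Finset.sum_ite_eq',
    Finset.mem_univ, if_pos, Finset.sum_const_zero, add_zero] at h
  have h3 : (∑ x : Fin n, ∑ y : Fin m,
      if x = i then -(gradient g p (Sum.inr (Sum.inl (x, y))) * p (Sum.inr (Sum.inl (x, y))))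
      else 0) =
      -∑ j, gradient g p (Sum.inr (Sum.inl (i, j))) * p (Sum.inr (Sum.inl (i, j))) := by
    rw [Finset.sum_eq_single i]
    · simp
    · intro b _ hb; simp [hb]
    · intro hi; simp at hi
  rw [h3] at h
  linarith [h]

noncomputable def vW (n m : ℕ) (j : Fin m) (p : tlE n m) : tlE n m :=
  WithLp.toLp 2 (Sum.elim (fun _ => 0)
    (Sum.elim (fun q => if q.2 = j then -p (Sum.inr (Sum.inl q)) else 0)
      (fun j' => if j' = j then p (Sum.inr (Sum.inr j')) else 0)))

noncomputable def γW (n m : ℕ) (j : Fin m) (p : tlE n m) (s : ℝ) : tlE n m :=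
  WithLp.toLp 2 (Sum.elim (fun i' => p (Sum.inl i'))
    (Sum.elim (fun q => (if q.2 = j then Real.exp (-s) else 1) * p (Sum.inr (Sum.inl q)))
      (fun j' => (if j' = j then Real.exp s else 1) * p (Sum.inr (Sum.inr j')))))

lemma γW_zero (n m : ℕ) (j : Fin m) (p : tlE n m) : γW n m j p 0 = p := by
  ext k
  rcases k with i' | q | j' <;> simp [γW]

lemma hasDerivAt_γW (n m : ℕ) (j : Fin m) (p : tlE n m) :
    HasDerivAt (γW n m j p) (vW n m j p) 0 := by
  have h : ∀ k, HasDerivAt (fun s => γW n m j p s k) (vW n m j p k) 0 := by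
    intro k
    rcases k with i' | q | j'
    · simp [γW, vW, hasDerivAt_const]
    · by_cases h : q.2 = j <;>
        simp [γW, vW, h, hasDerivAt_exp_neg_mul, hasDerivAt_const]
    · by_cases h : j' = j <;>
        simp [γW, vW, h, hasDerivAt_exp_mul, hasDerivAt_const]
  have h2 : HasDerivAt (fun s => (fun k => γW n m j p s k :
      (Fin n ⊕ (Fin n × Fin m) ⊕ Fin m) → ℝ)) (fun k => vW n m j p k) 0 :=
    hasDerivAt_pi.2 h
  exact ((PiLp.continuousLinearEquiv 2 ℝ
    (fun _ : Fin n ⊕ (Fin n × Fin m) ⊕ Fin m => ℝ)).symm.toContinuousLinearMap.hasFDerivAt.comp_hasDerivAt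
    0 h2 :)

lemma tl_γW (n m : ℕ) (j : Fin m) (p : tlE n m) (s : ℝ) :
    threeLayerLift n m (γW n m j p s) = threeLayerLift n m p := by
  ext i' j'
  rw [tl_apply, tl_apply]
  simp only [γW, Sum.elim_inl, Sum.elim_inr]
  by_cases h : j' = j
  · simp only [h, if_pos rfl, Real.exp_neg, if_true]
    field_simp
  · simp [h]

lemma fderiv_vW_zero (n m : ℕ) (f : Matrix (Fin n) (Fin m) ℝ → ℝ) (hf : ContDiff ℝ 1 f)
    (p : tlE n m) (j : Fin m) :
    fderiv ℝ (fun q => f (threeLayerLift n m q)) p (vW n m j p) = 0 := by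
  set g := fun q : tlE n m => f (threeLayerLift n m q) with hgdef
  have hgd : DifferentiableAt ℝ g p :=
    ((hf.differentiable one_ne_zero) _).comp p ((tl_diff n m) p)
  have hF' : HasFDerivAt g (fderiv ℝ g p) (γW n m j p 0) := by
    rw [γW_zero]; exact hgd.hasFDerivAt
  have hchain : HasDerivAt (fun s => g (γW n m j p s))
      (fderiv ℝ g p (vW n m j p)) 0 :=
    hF'.comp_hasDerivAt 0 (hasDerivAt_γW n m j p)
  have hconst : (fun s => g (γW n m j p s)) = fun _ => g p := by
    funext s
    simp only [hgdef]
    rw [tl_γW]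
  rw [hconst] at hchain
  exact hchain.unique (hasDerivAt_const 0 (g p))

lemma gradW (n m : ℕ) (f : Matrix (Fin n) (Fin m) ℝ → ℝ) (hf : ContDiff ℝ 1 f)
    (p : tlE n m) (j : Fin m) :
    (gradient (fun q => f (threeLayerLift n m q)) p) (Sum.inr (Sum.inr j)) *
        p (Sum.inr (Sum.inr j)) =
      ∑ i, (gradient (fun q => f (threeLayerLift n m q)) p) (Sum.inr (Sum.inl (i, j))) *
        p (Sum.inr (Sum.inl (i, j))) := by
  set g := fun q : tlE n m => f (threeLayerLift n m q) with hgdef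
  have h : (inner ℝ (gradient g p) (vW n m j p) : ℝ) = fderiv ℝ g p (vW n m j p) :=
    InnerProductSpace.toDual_symm_apply
  rw [fderiv_vW_zero n m f hf p j] at h
  rw [real_inner_comm] at h
  rw [PiLp.inner_apply] at h
  simp only [RCLike.inner_apply, conj_trivial, Fintype.sum_sum_type, Fintype.sum_prod_type,
    vW, Sum.elim_inl, Sum.elim_inr, mul_ite, mul_zero, mul_neg, Finset.sum_ite_eq',
    Finset.mem_univ, if_pos, Finset.sum_const_zero, zero_add, Finset.sum_neg] at h
  rw [Finset.sum_neg_distrib] at h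
  linarith [h]

/-- Along the gradient flow of `ℓ(u,V,w) = f(diag(u) V diag(w))`, the
quantities `u_i² − Σ_j V_{ij}²` and `w_j² − Σ_i V_{ij}²` are conserved. -/
theorem threeLayer_conservation_laws
    (n m : ℕ) (hn : 0 < n) (hm : 0 < m)
    (f : Matrix (Fin n) (Fin m) ℝ → ℝ) (hf : ContDiff ℝ 1 f)
    (T : ℝ) (hT : 0 < T)
    (θ : ℝ → EuclideanSpace ℝ (Fin n ⊕ (Fin n × Fin m) ⊕ Fin m))
    (hflow : ∀ t ∈ Set.Ico (0 : ℝ) T,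
      HasDerivWithinAt θ
        (-(gradient (fun p => f (threeLayerLift n m p)) (θ t)))
        (Set.Ico (0 : ℝ) T) t) :
    ∀ t ∈ Set.Ico (0 : ℝ) T,
      (∀ i : Fin n,
        (θ t (Sum.inl i)) ^ 2 - ∑ j, (θ t (Sum.inr (Sum.inl (i, j)))) ^ 2 =
        (θ 0 (Sum.inl i)) ^ 2 - ∑ j, (θ 0 (Sum.inr (Sum.inl (i, j)))) ^ 2) ∧
      (∀ j : Fin m,
        (θ t (Sum.inr (Sum.inr j))) ^ 2 - ∑ i, (θ t (Sum.inr (Sum.inl (i, j)))) ^ 2 =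
        (θ 0 (Sum.inr (Sum.inr j))) ^ 2 - ∑ i, (θ 0 (Sum.inr (Sum.inl (i, j)))) ^ 2) := by
  set g := fun p : tlE n m => f (threeLayerLift n m p) with hg
  have hθk : ∀ (k : Fin n ⊕ (Fin n × Fin m) ⊕ Fin m), ∀ t ∈ Set.Ico (0:ℝ) T,
      HasDerivWithinAt (fun t => θ t k) (-(gradient g (θ t) k)) (Set.Ico (0:ℝ) T) t := by
    intro k t ht
    exact ((EuclideanSpace.proj k).hasFDerivAt.comp_hasDerivWithinAt t (hflow t ht) :)
  have hconst : ∀ F : ℝ → ℝ,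
      (∀ t ∈ Set.Ico (0:ℝ) T, HasDerivWithinAt F 0 (Set.Ico (0:ℝ) T) t) →
      ∀ t ∈ Set.Ico (0:ℝ) T, F t = F 0 := by
    intro F hF t ht
    have hsub : Set.Icc (0:ℝ) t ⊆ Set.Ico 0 T := fun x hx =>
      ⟨hx.1, lt_of_le_of_lt hx.2 ht.2⟩
    have hcont : ContinuousOn F (Set.Icc 0 t) := fun x hx =>
      ((hF x (hsub hx)).continuousWithinAt).mono hsub
    have hderiv : ∀ x ∈ Set.Ico (0:ℝ) t, HasDerivWithinAt F 0 (Set.Ici x) x := by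
      intro x hx
      have hx' : x ∈ Set.Ico (0:ℝ) T := ⟨hx.1, lt_trans hx.2 ht.2⟩
      refine (hF x hx').mono_of_mem_nhdsWithin ?_
      have h1 : Set.Iio T ∈ nhdsWithin x (Set.Ici x) :=
        mem_nhdsWithin_of_mem_nhds (Iio_mem_nhds hx'.2)
      refine Filter.mem_of_superset (Filter.inter_mem self_mem_nhdsWithin h1) ?_
      rintro y ⟨hy1, hy2⟩
      exact ⟨le_trans hx'.1 hy1, hy2⟩
    exact constant_of_has_deriv_right_zero hcont hderiv t ⟨ht.1, le_refl t⟩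
  intro t ht
  constructor
  · intro i
    refine hconst (fun t => (θ t (Sum.inl i)) ^ 2 -
      ∑ j, (θ t (Sum.inr (Sum.inl (i, j)))) ^ 2) ?_ t ht
    intro x hx
    have hu := (hθk (Sum.inl i) x hx).pow 2
    have hV : HasDerivWithinAt (fun t => ∑ j, (θ t (Sum.inr (Sum.inl (i, j)))) ^ 2)
        (∑ j, ((2:ℕ) : ℝ) * θ x (Sum.inr (Sum.inl (i, j))) ^ (2-1) *
          (-(gradient g (θ x) (Sum.inr (Sum.inl (i, j)))))) (Set.Ico (0:ℝ) T) x :=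
      HasDerivWithinAt.fun_sum fun j _ => (hθk (Sum.inr (Sum.inl (i, j))) x hx).pow 2
    have hd := hu.sub hV
    refine hd.congr_deriv ?_
    have key := gradU n m f hf (θ x) i
    have hsum : ∑ j, ((2:ℕ) : ℝ) * θ x (Sum.inr (Sum.inl (i, j))) ^ (2-1) *
          (-(gradient g (θ x) (Sum.inr (Sum.inl (i, j))))) =
        -2 * ∑ j, gradient g (θ x) (Sum.inr (Sum.inl (i, j))) *
          θ x (Sum.inr (Sum.inl (i, j))) := by
      rw [Finset.mul_sum]
      exact Finset.sum_congr rfl fun j _ => by push_cast; ring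
    rw [hsum, ← key]
    push_cast
    ring
  · intro j
    refine hconst (fun t => (θ t (Sum.inr (Sum.inr j))) ^ 2 -
      ∑ i, (θ t (Sum.inr (Sum.inl (i, j)))) ^ 2) ?_ t ht
    intro x hx
    have hu := (hθk (Sum.inr (Sum.inr j)) x hx).pow 2
    have hV : HasDerivWithinAt (fun t => ∑ i, (θ t (Sum.inr (Sum.inl (i, j)))) ^ 2)
        (∑ i, ((2:ℕ) : ℝ) * θ x (Sum.inr (Sum.inl (i, j))) ^ (2-1) *
          (-(gradient g (θ x) (Sum.inr (Sum.inl (i, j)))))) (Set.Ico (0:ℝ) T) x :=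
      HasDerivWithinAt.fun_sum fun i _ => (hθk (Sum.inr (Sum.inl (i, j))) x hx).pow 2
    have hd := hu.sub hV
    refine hd.congr_deriv ?_
    have key := gradW n m f hf (θ x) j
    have hsum : ∑ i, ((2:ℕ) : ℝ) * θ x (Sum.inr (Sum.inl (i, j))) ^ (2-1) *
          (-(gradient g (θ x) (Sum.inr (Sum.inl (i, j))))) =
        -2 * ∑ i, gradient g (θ x) (Sum.inr (Sum.inl (i, j))) *
          θ x (Sum.inr (Sum.inl (i, j))) := by
      rw [Finset.mul_sum]
      exact Finset.sum_congr rfl fun i _ => by push_cast; ring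
    rw [hsum, ← key]
    push_cast
    ring
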